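/- Let n ≥ 2 be even. Then the convex hull of G_{[−1,1]^n} equals the polytope { (x,w) ∈ [−1,1]^n × [−1,1] : Σ_{i∈I} x_i − Σ_{i∉I} x_i + w ≤ n−1 for every subset I ⊆ {1,…,n} of odd cardinality, and Σ_{i∈I} x_i − Σ_{i∉I} x_i + w ≥ −(n−1) for every subset I ⊆ {1,…,n} of even cardinality }. -/

import Mathlib

open Finset


open Finset

lemma aux1 {ι : Type*} [DecidableEq ι] (s : Finset ι) (y : ι → ℝ)
    (h : ∀ i ∈ s, -1 ≤ y i ∧ y i ≤ 1) :
    (∑ i ∈ s, y i) - ∏ i ∈ s, y i ≤ (s.card : ℝ) - 1 := by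
  induction s using Finset.induction_on with
  | empty => simp
  | insert _ _ ha ih =>
    rename_i a s
    have ih' := ih (fun i hi => h i (Finset.mem_insert_of_mem hi))
    have ha1 := h a (Finset.mem_insert_self a s)
    have hP : |∏ i ∈ s, y i| ≤ 1 := by
      rw [Finset.abs_prod]
      apply Finset.prod_le_one
      · intro i hi; exact abs_nonneg _
      · intro i hi
        exact abs_le.2 (h i (Finset.mem_insert_of_mem hi))
    rw [Finset.sum_insert ha, Finset.prod_insert ha, Finset.card_insert_of_notMem ha]
    have hP' := abs_le.1 hP
    push_cast
    nlinarith [mul_nonneg (by linarith : (0:ℝ) ≤ 1 - ∏ i ∈ s, y i)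
      (by linarith : (0:ℝ) ≤ 1 - y a)]

lemma aux2 {n : ℕ} (x : Fin n → ℝ) (hx : ∀ i, -1 ≤ x i ∧ x i ≤ 1) (I : Finset (Fin n)) :
    (∑ i ∈ I, x i) - (∑ i ∈ Iᶜ, x i) - (-1 : ℝ) ^ Iᶜ.card * ∏ j, x j ≤ (n : ℝ) - 1 := by
  set y : Fin n → ℝ := fun i => if i ∈ I then x i else -x i with hy
  have hb : ∀ i ∈ Finset.univ, -1 ≤ y i ∧ y i ≤ 1 := by
    intro i _
    by_cases hi : i ∈ I <;> simp [hy, hi] <;> constructor <;> linarith [(hx i).1, (hx i).2]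
  have key := aux1 Finset.univ y hb
  have hsum : ∑ i, y i = (∑ i ∈ I, x i) - (∑ i ∈ Iᶜ, x i) := by
    rw [← Finset.sum_add_sum_compl I y]
    have h1 : ∑ i ∈ I, y i = ∑ i ∈ I, x i :=
      Finset.sum_congr rfl (fun i hi => by simp [hy, hi])
    have h2 : ∑ i ∈ Iᶜ, y i = -∑ i ∈ Iᶜ, x i := by
      rw [← Finset.sum_neg_distrib]
      exact Finset.sum_congr rfl (fun i hi => by
        simp only [Finset.mem_compl] at hi; simp [hy, hi])
    rw [h1, h2]; ring
  have hprod : ∏ i, y i = (-1 : ℝ) ^ Iᶜ.card * ∏ j, x j := by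
    rw [← Finset.prod_mul_prod_compl I y, ← Finset.prod_mul_prod_compl I x]
    have h1 : ∏ i ∈ I, y i = ∏ i ∈ I, x i :=
      Finset.prod_congr rfl (fun i hi => by simp [hy, hi])
    have h2 : ∏ i ∈ Iᶜ, y i = (-1 : ℝ) ^ Iᶜ.card * ∏ i ∈ Iᶜ, x i := by
      have : ∀ i ∈ Iᶜ, y i = -1 * x i := by
        intro i hi; simp only [Finset.mem_compl] at hi; simp [hy, hi]
      rw [Finset.prod_congr rfl this, Finset.prod_mul_distrib, Finset.prod_const]
    rw [h1, h2]; ring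
  rw [hsum, hprod] at key
  simpa using key



lemma aux_key {n : ℕ} (hn : 2 ≤ n) (heven : Even n) (c : Fin n → ℝ) (γ : ℝ)
    (x : Fin n → ℝ) (w : ℝ)
    (hx : ∀ i, -1 ≤ x i ∧ x i ≤ 1) (hw : -1 ≤ w ∧ w ≤ 1)
    (h3 : ∀ I : Finset (Fin n), Odd I.card →
            (∑ i ∈ I, x i) - (∑ i ∈ Iᶜ, x i) + w ≤ (n : ℝ) - 1)
    (h4 : ∀ I : Finset (Fin n), Even I.card →
            -((n : ℝ) - 1) ≤ (∑ i ∈ I, x i) - (∑ i ∈ Iᶜ, x i) + w) :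
    ∃ v : Fin n → ℝ, (∀ i, v i = 1 ∨ v i = -1) ∧
      (∑ i, c i * x i) + γ * w ≤ (∑ i, c i * v i) + γ * ∏ j, v j := by
  classical
  set s : Fin n → ℝ := fun i => if 0 ≤ c i then 1 else -1 with hs
  set I : Finset (Fin n) := Finset.univ.filter (fun i => 0 ≤ c i) with hI
  have hs1 : ∀ i, s i = 1 ∨ s i = -1 := by
    intro i; by_cases h : 0 ≤ c i <;> simp [hs, h]
  have hcs : ∀ i, c i = s i * |c i| := by
    intro i; by_cases h : 0 ≤ c i
    · simp [hs, h, abs_of_nonneg h]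
    · simp [hs, h, abs_of_neg (lt_of_not_ge h)]
  have hsx1 : ∀ i, s i * x i ≤ 1 := by
    intro i
    rcases hs1 i with h | h <;> rw [h] <;> linarith [(hx i).1, (hx i).2]
  have hsum_split : ∑ i, s i * x i = (∑ i ∈ I, x i) - (∑ i ∈ Iᶜ, x i) := by
    rw [← Finset.sum_add_sum_compl I (fun i => s i * x i)]
    have h1 : ∑ i ∈ I, s i * x i = ∑ i ∈ I, x i :=
      Finset.sum_congr rfl (fun i hi => by
        simp only [hI, Finset.mem_filter] at hi; simp [hs, hi.2])
    have h2 : ∑ i ∈ Iᶜ, s i * x i = -∑ i ∈ Iᶜ, x i := by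
      rw [← Finset.sum_neg_distrib]
      exact Finset.sum_congr rfl (fun i hi => by
        simp only [hI, Finset.mem_compl, Finset.mem_filter, Finset.mem_univ, true_and] at hi
        simp [hs, hi])
    rw [h1, h2]; ring
  have hprod_s : ∏ i, s i = (-1 : ℝ) ^ Iᶜ.card := by
    rw [← Finset.prod_mul_prod_compl I s]
    have h1 : ∏ i ∈ I, s i = 1 :=
      Finset.prod_eq_one (fun i hi => by
        simp only [hI, Finset.mem_filter] at hi; simp [hs, hi.2])
    have h2 : ∏ i ∈ Iᶜ, s i = (-1 : ℝ) ^ Iᶜ.card := by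
      rw [← Finset.prod_const]
      exact Finset.prod_congr rfl (fun i hi => by
        simp only [hI, Finset.mem_compl, Finset.mem_filter, Finset.mem_univ, true_and] at hi
        simp [hs, hi])
    rw [h1, h2, one_mul]
  have hsum_cs : ∑ i, c i * s i = ∑ i, |c i| := by
    apply Finset.sum_congr rfl
    intro i _
    nth_rewrite 1 [hcs i]
    rcases hs1 i with h | h <;> rw [h] <;> ring
  have hbox : ∑ i, c i * x i ≤ ∑ i, |c i| := by
    apply Finset.sum_le_sum
    intro i _
    calc c i * x i ≤ |c i * x i| := le_abs_self _
    _ = |c i| * |x i| := abs_mul _ _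
    _ ≤ |c i| * 1 := by
        apply mul_le_mul_of_nonneg_left _ (abs_nonneg _)
        exact abs_le.2 (hx i)
    _ = |c i| := mul_one _
  have hcard : I.card + Iᶜ.card = n := by
    rw [Finset.card_add_card_compl]; simp
  -- the cube-vertex fiber membership fact used for both `s` and updates is inline below
  rcases Nat.even_or_odd (Iᶜ.card) with hpar | hpar
  · -- ∏ s = 1
    have hps : ∏ i, s i = 1 := by rw [hprod_s, hpar.neg_one_pow]
    rcases le_or_gt 0 γ with hγ | hγ
    · -- Case A
      refine ⟨s, hs1, ?_⟩
      rw [hsum_cs, hps, mul_one]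
      have : γ * w ≤ γ := by nlinarith [hw.2]
      linarith
    · -- Case D : γ < 0, Even Iᶜ.card
      obtain ⟨k, -, hk⟩ := Finset.exists_min_image Finset.univ (fun i => |c i|)
        ⟨⟨0, by omega⟩, Finset.mem_univ _⟩
      set t : ℝ := min (-γ) |c k| with ht
      have ht0 : 0 ≤ t := le_min (by linarith) (abs_nonneg _)
      have htγ : t ≤ -γ := min_le_left _ _
      have htc : ∀ i, t ≤ |c i| := fun i => le_trans (min_le_right _ _) (hk i (Finset.mem_univ i))
      have hcut0 := h4 Iᶜ hpar
      rw [compl_compl] at hcut0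
      have hcut : ∑ i, s i * x i - w ≤ (n : ℝ) - 1 := by
        rw [hsum_split]; linarith
      have hmain : (∑ i, c i * x i) + γ * w ≤ (∑ i, |c i|) - γ - 2 * t := by
        have h5 : ∑ i, c i * x i
            = (∑ i, (|c i| - t) * (s i * x i)) + t * ∑ i, s i * x i := by
          rw [Finset.mul_sum, ← Finset.sum_add_distrib]
          apply Finset.sum_congr rfl
          intro i _
          nth_rewrite 1 [hcs i]
          rcases hs1 i with h | h <;> rw [h] <;> ring
        have h6 : ∑ i, (|c i| - t) * (s i * x i) ≤ ∑ i, (|c i| - t) :=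
          Finset.sum_le_sum (fun i _ =>
            mul_le_of_le_one_right (by linarith [htc i]) (hsx1 i))
        have h7 : ∑ i, (|c i| - t) = (∑ i, |c i|) - n * t := by
          rw [Finset.sum_sub_distrib, Finset.sum_const, Finset.card_univ, Fintype.card_fin,
            nsmul_eq_mul]
        have h8 : t * (∑ i, s i * x i - w) ≤ t * ((n : ℝ) - 1) :=
          mul_le_mul_of_nonneg_left hcut ht0
        have h9 : (γ + t) * w ≤ -(γ + t) := by nlinarith [hw.1]
        have : (∑ i, c i * x i) + γ * w
            = (∑ i, (|c i| - t) * (s i * x i)) + t * (∑ i, s i * x i - w) + (γ + t) * w := by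
          rw [h5]; ring
        rw [this]
        have h10 := h7 ▸ h6
        linarith
      rcases le_total (-γ) (|c k|) with hmin | hmin
      · have htval : t = -γ := min_eq_left hmin
        refine ⟨s, hs1, ?_⟩
        rw [hsum_cs, hps, mul_one]
        rw [htval] at hmain; linarith
      · have htval : t = |c k| := min_eq_right hmin
        refine ⟨Function.update s k (-(s k)), ?_, ?_⟩
        · intro i
          by_cases h : i = k
          · subst h; rw [Function.update_self]
            rcases hs1 i with h | h <;> rw [h] <;> simp
          · rw [Function.update_of_ne h]; exact hs1 i
        · have hksum : ∑ i, c i * Function.update s k (-(s k)) i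
              = (∑ i, |c i|) - 2 * |c k| := by
            rw [Finset.sum_eq_sum_sdiff_singleton_add (Finset.mem_univ k)]
            rw [Function.update_self]
            have : ∑ i ∈ Finset.univ \ {k}, c i * Function.update s k (-(s k)) i
                = ∑ i ∈ Finset.univ \ {k}, c i * s i := by
              apply Finset.sum_congr rfl
              intro i hi
              rw [Function.update_of_ne (by simp at hi; exact hi)]
            rw [this]
            have h11 : ∑ i ∈ Finset.univ \ {k}, c i * s i = (∑ i, c i * s i) - c k * s k := by
              rw [Finset.sum_eq_sum_sdiff_singleton_add (Finset.mem_univ k)]; ring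
            have h12 : c k * s k = |c k| := by
              nth_rewrite 1 [hcs k]
              rcases hs1 k with h | h <;> rw [h] <;> ring
            rw [h11, hsum_cs]
            linarith [h12]
          have hkprod : ∏ i, Function.update s k (-(s k)) i = -∏ i, s i := by
            rw [Finset.prod_eq_prod_sdiff_singleton_mul (Finset.mem_univ k),
              Finset.prod_eq_prod_sdiff_singleton_mul (Finset.mem_univ k) s]
            rw [Function.update_self]
            have : ∏ i ∈ Finset.univ \ {k}, Function.update s k (-(s k)) i
                = ∏ i ∈ Finset.univ \ {k}, s i := by
              apply Finset.prod_congr rfl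
              intro i hi
              rw [Function.update_of_ne (by simp at hi; exact hi)]
            rw [this]; ring
          rw [hksum, hkprod, hps]
          rw [htval] at hmain; linarith
  · -- Odd Iᶜ.card : ∏ s = -1
    have hps : ∏ i, s i = -1 := by rw [hprod_s, hpar.neg_one_pow]
    rcases le_or_gt γ 0 with hγ | hγ
    · -- Case B
      refine ⟨s, hs1, ?_⟩
      rw [hsum_cs, hps]
      have : γ * w ≤ γ * (-1) := by nlinarith [hw.1]
      linarith
    · -- Case C : γ > 0, Odd Iᶜ.card ⇒ Odd I.card
      obtain ⟨k, -, hk⟩ := Finset.exists_min_image Finset.univ (fun i => |c i|)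
        ⟨⟨0, by omega⟩, Finset.mem_univ _⟩
      set t : ℝ := min γ |c k| with ht
      have ht0 : 0 ≤ t := le_min (by linarith) (abs_nonneg _)
      have htγ : t ≤ γ := min_le_left _ _
      have htc : ∀ i, t ≤ |c i| := fun i => le_trans (min_le_right _ _) (hk i (Finset.mem_univ i))
      have hIodd : Odd I.card := by
        rcases hpar with ⟨a, ha⟩
        obtain ⟨b, hb⟩ := heven
        refine Nat.odd_iff.2 ?_
        omega
      have hcut0 := h3 I hIodd
      have hcut : ∑ i, s i * x i + w ≤ (n : ℝ) - 1 := by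
        rw [hsum_split]; linarith
      have hmain : (∑ i, c i * x i) + γ * w ≤ (∑ i, |c i|) + γ - 2 * t := by
        have h5 : ∑ i, c i * x i
            = (∑ i, (|c i| - t) * (s i * x i)) + t * ∑ i, s i * x i := by
          rw [Finset.mul_sum, ← Finset.sum_add_distrib]
          apply Finset.sum_congr rfl
          intro i _
          nth_rewrite 1 [hcs i]
          rcases hs1 i with h | h <;> rw [h] <;> ring
        have h6 : ∑ i, (|c i| - t) * (s i * x i) ≤ ∑ i, (|c i| - t) :=
          Finset.sum_le_sum (fun i _ =>
            mul_le_of_le_one_right (by linarith [htc i]) (hsx1 i))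
        have h7 : ∑ i, (|c i| - t) = (∑ i, |c i|) - n * t := by
          rw [Finset.sum_sub_distrib, Finset.sum_const, Finset.card_univ, Fintype.card_fin,
            nsmul_eq_mul]
        have h8 : t * (∑ i, s i * x i + w) ≤ t * ((n : ℝ) - 1) :=
          mul_le_mul_of_nonneg_left hcut ht0
        have h9 : (γ - t) * w ≤ γ - t := by nlinarith [hw.2]
        have : (∑ i, c i * x i) + γ * w
            = (∑ i, (|c i| - t) * (s i * x i)) + t * (∑ i, s i * x i + w) + (γ - t) * w := by
          rw [h5]; ring
        rw [this]
        have h10 := h7 ▸ h6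
        linarith
      rcases le_total γ (|c k|) with hmin | hmin
      · have htval : t = γ := min_eq_left hmin
        refine ⟨s, hs1, ?_⟩
        rw [hsum_cs, hps]
        rw [htval] at hmain; linarith
      · have htval : t = |c k| := min_eq_right hmin
        refine ⟨Function.update s k (-(s k)), ?_, ?_⟩
        · intro i
          by_cases h : i = k
          · subst h; rw [Function.update_self]
            rcases hs1 i with h | h <;> rw [h] <;> simp
          · rw [Function.update_of_ne h]; exact hs1 i
        · have hksum : ∑ i, c i * Function.update s k (-(s k)) i
              = (∑ i, |c i|) - 2 * |c k| := by
            rw [Finset.sum_eq_sum_sdiff_singleton_add (Finset.mem_univ k)]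
            rw [Function.update_self]
            have : ∑ i ∈ Finset.univ \ {k}, c i * Function.update s k (-(s k)) i
                = ∑ i ∈ Finset.univ \ {k}, c i * s i := by
              apply Finset.sum_congr rfl
              intro i hi
              rw [Function.update_of_ne (by simp at hi; exact hi)]
            rw [this]
            have h11 : ∑ i ∈ Finset.univ \ {k}, c i * s i = (∑ i, c i * s i) - c k * s k := by
              rw [Finset.sum_eq_sum_sdiff_singleton_add (Finset.mem_univ k)]; ring
            have h12 : c k * s k = |c k| := by
              nth_rewrite 1 [hcs k]
              rcases hs1 k with h | h <;> rw [h] <;> ring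
            rw [h11, hsum_cs]
            linarith [h12]
          have hkprod : ∏ i, Function.update s k (-(s k)) i = -∏ i, s i := by
            rw [Finset.prod_eq_prod_sdiff_singleton_mul (Finset.mem_univ k),
              Finset.prod_eq_prod_sdiff_singleton_mul (Finset.mem_univ k) s]
            rw [Function.update_self]
            have : ∏ i ∈ Finset.univ \ {k}, Function.update s k (-(s k)) i
                = ∏ i ∈ Finset.univ \ {k}, s i := by
              apply Finset.prod_congr rfl
              intro i hi
              rw [Function.update_of_ne (by simp at hi; exact hi)]
            rw [this]; ring
          rw [hksum, hkprod, hps]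
          rw [htval] at hmain; linarith





lemma icc_iff {n : ℕ} (q : Fin n → ℝ) :
    q ∈ Set.Icc (-1 : Fin n → ℝ) 1 ↔ ∀ i, -1 ≤ q i ∧ q i ≤ 1 :=
  ⟨fun h i => ⟨by simpa using h.1 i, by simpa using h.2 i⟩,
   fun h => ⟨fun i => by simpa using (h i).1, fun i => by simpa using (h i).2⟩⟩

lemma odd_compl_card {n : ℕ} (heven : Even n) {I : Finset (Fin n)} (hI : Odd I.card) :
    Odd Iᶜ.card := by
  have h := Finset.card_add_card_compl I
  rw [Fintype.card_fin] at h
  rcases hI with ⟨a, ha⟩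
  rcases heven with ⟨b, hb⟩
  exact Nat.odd_iff.2 (by omega)


/-- Convex hull of the graph of the multilinear monomial over `[-1,1]^n`, `n` even. -/
theorem stmt8 (n : ℕ) (hn : 2 ≤ n) (heven : Even n) :
    convexHull ℝ {p : (Fin n → ℝ) × ℝ |
        p.1 ∈ Set.Icc (-1 : Fin n → ℝ) 1 ∧ p.2 = ∏ j, p.1 j}
      = {p : (Fin n → ℝ) × ℝ | p.1 ∈ Set.Icc (-1 : Fin n → ℝ) 1 ∧
          p.2 ∈ Set.Icc (-1 : ℝ) 1 ∧
          (∀ I : Finset (Fin n), Odd I.card →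
            (∑ i ∈ I, p.1 i) - (∑ i ∈ Iᶜ, p.1 i) + p.2 ≤ (n : ℝ) - 1) ∧
          (∀ I : Finset (Fin n), Even I.card →
            -((n : ℝ) - 1) ≤ (∑ i ∈ I, p.1 i) - (∑ i ∈ Iᶜ, p.1 i) + p.2)} := by
  classical
  apply Set.Subset.antisymm
  · apply convexHull_min
    · -- graph ⊆ polytope
      rintro ⟨x, w⟩ ⟨hx, hw⟩
      simp only [Set.mem_setOf_eq] at hx hw ⊢
      have hxb : ∀ i, -1 ≤ x i ∧ x i ≤ 1 := (icc_iff x).1 hx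
      have habs : |∏ j, x j| ≤ 1 := by
        rw [Finset.abs_prod]
        exact Finset.prod_le_one (fun i _ => abs_nonneg _)
          (fun i _ => abs_le.2 (hxb i))
      have habs' := abs_le.1 habs
      refine ⟨hx, ?_, ?_, ?_⟩
      · rw [Set.mem_Icc, hw]; exact habs'
      · intro I hI
        have h := aux2 x hxb I
        rw [(odd_compl_card heven hI).neg_one_pow] at h
        rw [hw]; linarith
      · intro I hI
        have h := aux2 x hxb Iᶜ
        rw [compl_compl, hI.neg_one_pow] at h
        rw [hw]; linarith
    · -- polytope is convex
      intro p hp q hq a b ha hb hab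
      obtain ⟨hp1, hp2, hp3, hp4⟩ := hp
      obtain ⟨hq1, hq2, hq3, hq4⟩ := hq
      have hp1' := (icc_iff p.1).1 hp1
      have hq1' := (icc_iff q.1).1 hq1
      rw [Set.mem_Icc] at hp2 hq2
      have hfst : ∀ i, (a • p + b • q).1 i = a * p.1 i + b * q.1 i := by
        intro i
        simp [Prod.fst_add, Prod.smul_fst]
      have hsnd : (a • p + b • q).2 = a * p.2 + b * q.2 := by
        simp [Prod.snd_add, Prod.smul_snd]
      have hsum : ∀ J : Finset (Fin n),
          ∑ i ∈ J, (a • p + b • q).1 i = a * (∑ i ∈ J, p.1 i) + b * (∑ i ∈ J, q.1 i) := by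
        intro J
        rw [Finset.mul_sum, Finset.mul_sum, ← Finset.sum_add_distrib]
        exact Finset.sum_congr rfl (fun i _ => hfst i)
      refine ⟨?_, ?_, ?_, ?_⟩
      · rw [icc_iff]
        intro i
        rw [hfst i]
        constructor <;> nlinarith [(hp1' i).1, (hp1' i).2, (hq1' i).1, (hq1' i).2]
      · rw [Set.mem_Icc, hsnd]
        constructor <;> nlinarith [hp2.1, hp2.2, hq2.1, hq2.2]
      · intro I hI
        rw [hsum I, hsum Iᶜ, hsnd]
        nlinarith [hp3 I hI, hq3 I hI]
      · intro I hI
        rw [hsum I, hsum Iᶜ, hsnd]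
        nlinarith [hp4 I hI, hq4 I hI]
  · -- polytope ⊆ convex hull
    intro p hp
    obtain ⟨hp1, hp2, hp3, hp4⟩ := hp
    by_contra hmem
    set V : Set ((Fin n → ℝ) × ℝ) :=
      (fun v : Fin n → ℝ => (v, ∏ j, v j)) '' {v | ∀ i, v i = 1 ∨ v i = -1} with hV
    have hVfin : V.Finite := by
      apply Set.Finite.image
      have hsub : {v : Fin n → ℝ | ∀ i, v i = 1 ∨ v i = -1}
          ⊆ Set.pi Set.univ (fun _ => ({1, -1} : Set ℝ)) := by
        intro v hv i _
        rcases hv i with h | h <;> simp [h]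
      exact (Set.Finite.pi (fun _ => (Set.finite_singleton (-1:ℝ)).insert 1)).subset hsub
    have hVS : V ⊆ {p : (Fin n → ℝ) × ℝ |
        p.1 ∈ Set.Icc (-1 : Fin n → ℝ) 1 ∧ p.2 = ∏ j, p.1 j} := by
      rintro _ ⟨v, hv, rfl⟩
      refine ⟨(icc_iff v).2 (fun i => ?_), rfl⟩
      rcases hv i with h | h <;> rw [h] <;> norm_num
    have hmemV : p ∉ convexHull ℝ V := fun h => hmem (convexHull_mono hVS h)
    obtain ⟨f, u, hfu, hup⟩ := geometric_hahn_banach_closed_point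
      (convex_convexHull ℝ V) (hVfin.isCompact_convexHull (𝕜 := ℝ)).isClosed hmemV
    set c : Fin n → ℝ := fun i => f (Pi.single i 1, 0) with hc
    set γ : ℝ := f (0, 1) with hγ
    have hf_eval : ∀ q : (Fin n → ℝ) × ℝ, f q = (∑ i, c i * q.1 i) + γ * q.2 := by
      intro q
      have hq : q = (∑ i, q.1 i • ((Pi.single i (1:ℝ), (0:ℝ)) : (Fin n → ℝ) × ℝ))
          + q.2 • (((0 : Fin n → ℝ), (1:ℝ)) : (Fin n → ℝ) × ℝ) := by
        apply Prod.ext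
        · simp only [Prod.fst_add, Prod.fst_sum, Prod.smul_fst, Prod.smul_snd, smul_zero,
            smul_eq_mul]
          funext j
          simp [Pi.single_apply, Finset.sum_apply, mul_ite, Finset.sum_ite_eq]
        · simp [Prod.snd_add, Prod.snd_sum, Prod.smul_snd, Prod.smul_fst]
      nth_rewrite 1 [hq]
      rw [map_add, map_sum]
      simp only [map_smul, smul_eq_mul]
      rw [← hγ]
      congr 1
      · exact Finset.sum_congr rfl (fun i _ => by rw [hc, mul_comm])
      · ring
    have hxb : ∀ i, -1 ≤ p.1 i ∧ p.1 i ≤ 1 := (icc_iff p.1).1 hp1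
    rw [Set.mem_Icc] at hp2
    obtain ⟨v, hv1, hv2⟩ := aux_key hn heven c γ p.1 p.2 hxb hp2 hp3 hp4
    have hvV : (v, ∏ j, v j) ∈ V := ⟨v, hv1, rfl⟩
    have h1 := hfu _ (subset_convexHull ℝ V hvV)
    rw [hf_eval] at h1 hup
    simp only at h1
    linarith [hv2]
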